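/- arXiv:2007.04858 — 2 statements merged into one kernel-verified Lean document; each statement's English description precedes it below -/
import Mathlib

section
/- Let A ∈ ℝ^{n×n} be symmetric positive semidefinite of rank k, and let 1 ≤ r ≤ k. Then there exists an index set J* ⊆ {1,…,n} with |J*| = r such that A(J*,J*) is invertible and ‖A − A_{J*}‖_F ≤ √(n−r) · (r+1) · √(Σ_{s=r+1}^{n} σ_s(A)²). -/
open Matrix Finset

/-- Cross approximation `A_J = A(:,J) A(J,J)⁻¹ A(J,:)` built on the principal submatrix
indexed by the finite index set `J`. -/
noncomputable def crossApprox {n : ℕ} (A : Matrix (Fin n) (Fin n) ℝ) (J : Finset (Fin n)) :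
    Matrix (Fin n) (Fin n) ℝ :=
  A.submatrix id (Subtype.val : J → Fin n) *
    (A.submatrix (Subtype.val : J → Fin n) (Subtype.val : J → Fin n))⁻¹ *
    A.submatrix (Subtype.val : J → Fin n) id

/-- Determinant of the principal submatrix `A(J,J)`. -/
noncomputable def pminor {n : ℕ} (A : Matrix (Fin n) (Fin n) ℝ) (J : Finset (Fin n)) : ℝ :=
  (A.submatrix (Subtype.val : J → Fin n) (Subtype.val : J → Fin n)).det

/-- Nuclear norm: sum of the singular values of `M`, i.e. of the square roots of the
eigenvalues of `Mᴴ M`. -/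
noncomputable def nuclearNorm {n : ℕ} (M : Matrix (Fin n) (Fin n) ℝ) : ℝ :=
  ∑ i, Real.sqrt ((Matrix.isHermitian_conjTranspose_mul_self M).eigenvalues i)

/-- Frobenius norm. -/
noncomputable def frobNorm {n : ℕ} (M : Matrix (Fin n) (Fin n) ℝ) : ℝ :=
  Real.sqrt (∑ i, ∑ j, (M i j) ^ 2)

/-- Spectral norm: the largest singular value. -/
noncomputable def specNorm {n : ℕ} (M : Matrix (Fin n) (Fin n) ℝ) : ℝ :=
  ⨆ i, Real.sqrt ((Matrix.isHermitian_conjTranspose_mul_self M).eigenvalues i)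

/-- Max norm: largest magnitude of an entry. -/
noncomputable def maxNorm {n : ℕ} (M : Matrix (Fin n) (Fin n) ℝ) : ℝ :=
  ⨆ i, ⨆ j, |M i j|

/-- The tuple `f` sorted in nonincreasing order. -/
noncomputable def sortedDesc {m : ℕ} (f : Fin m → ℝ) : Fin m → ℝ :=
  fun i => -(((fun j => -f j) ∘ Tuple.sort fun j => -f j) i)

/-- `Esum M k` is the sum of all `k × k` principal minors of `M`. -/
noncomputable def Esum {n : ℕ} (M : Matrix (Fin n) (Fin n) ℝ) (k : ℕ) : ℝ :=
  ∑ K ∈ Finset.powersetCard k (Finset.univ : Finset (Fin n)), pminor M K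

noncomputable section CB

variable {R : Type*} [CommRing R]

/-- The finset of strictly monotone maps `Fin m → Fin N`. -/
noncomputable def monoMaps (m N : ℕ) : Finset (Fin m → Fin N) :=
  @Finset.filter _ (fun f => StrictMono f) (Classical.decPred _) Finset.univ

lemma mem_monoMaps {m N : ℕ} {f : Fin m → Fin N} : f ∈ monoMaps m N ↔ StrictMono f := by
  simp [monoMaps]

lemma det_mul_expand {m N : ℕ} (M : Matrix (Fin m) (Fin N) R) (Q : Matrix (Fin N) (Fin m) R) :
    (M * Q).det = ∑ p : Fin m → Fin N, (M.submatrix id p).det * ∏ i, Q (p i) i := by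
  simp only [det_apply', mul_apply]
  have h1 : ∀ σ : Equiv.Perm (Fin m),
      (∏ i, ∑ j, M (σ i) j * Q j i) =
        ∑ p : Fin m → Fin N, ∏ i, M (σ i) (p i) * Q (p i) i := by
    intro σ
    rw [Finset.prod_univ_sum, Fintype.piFinset_univ]
  simp only [h1, Finset.mul_sum]
  rw [Finset.sum_comm]
  refine Finset.sum_congr rfl fun p _ => ?_
  rw [Finset.sum_mul]
  refine Finset.sum_congr rfl fun σ _ => ?_
  simp only [submatrix_apply, id_eq]
  rw [Finset.prod_mul_distrib, mul_assoc]

lemma det_submatrix_id_zero_of_not_inj {m N : ℕ} (M : Matrix (Fin m) (Fin N) R)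
    {p : Fin m → Fin N} (h : ¬ Function.Injective p) : (M.submatrix id p).det = 0 := by
  simp only [Function.Injective, not_forall] at h
  obtain ⟨i, j, hpij, hij⟩ := h
  exact det_zero_of_column_eq hij (fun k => by simp [submatrix_apply, hpij])

/-- Cauchy–Binet. -/
lemma cauchy_binet {m N : ℕ} (M : Matrix (Fin m) (Fin N) R) (Q : Matrix (Fin N) (Fin m) R) :
    (M * Q).det =
      ∑ f ∈ monoMaps m N, (M.submatrix id f).det * (Q.submatrix f id).det := by
  classical
  rw [det_mul_expand]
  rw [← Finset.sum_filter_add_sum_filter_not Finset.univ (fun p => Function.Injective p)]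
  have h0 : ∑ p ∈ Finset.univ.filter (fun p => ¬ Function.Injective p),
      (M.submatrix id p).det * ∏ i, Q (p i) i = 0 := by
    refine Finset.sum_eq_zero fun p hp => ?_
    rw [Finset.mem_filter] at hp
    rw [det_submatrix_id_zero_of_not_inj M hp.2, zero_mul]
  rw [h0, add_zero]
  -- bijection between injective maps and (monotone map, permutation) pairs
  rw [show (∑ f ∈ monoMaps m N, (M.submatrix id f).det * (Q.submatrix f id).det) =
      ∑ x ∈ (monoMaps m N) ×ˢ (Finset.univ : Finset (Equiv.Perm (Fin m))),
        (M.submatrix id (x.1 ∘ x.2)).det * ∏ i, Q ((x.1 ∘ x.2) i) i from ?_]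
  · -- sum_bij from product to injective maps
    refine (Finset.sum_bij (fun x _ => x.1 ∘ x.2) ?_ ?_ ?_ ?_).symm
    · rintro ⟨f, σ⟩ hx
      rw [Finset.mem_product] at hx
      have hf : StrictMono f := mem_monoMaps.mp hx.1
      simp only [Finset.mem_filter, Finset.mem_univ, true_and]
      exact hf.injective.comp σ.injective
    · rintro ⟨f, σ⟩ hx ⟨g, τ⟩ hy hfg
      rw [Finset.mem_product] at hx hy
      have hf : StrictMono f := mem_monoMaps.mp hx.1
      have hg : StrictMono g := mem_monoMaps.mp hy.1
      have hfg' : f ∘ σ = g ∘ τ := hfg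
      have hrange : Set.range f = Set.range g := by
        have h2 : Set.range (f ∘ σ) = Set.range (g ∘ τ) := by rw [hfg']
        rwa [Set.range_comp, Set.range_comp, Equiv.range_eq_univ, Equiv.range_eq_univ,
          Set.image_univ, Set.image_univ] at h2
      have hfgeq : f = g := by
        haveI : WellFoundedLT (Fin m) := inferInstance
        exact (hf.range_inj hg).mp hrange
      subst hfgeq
      have hστ : σ = τ := Equiv.ext fun i => hf.injective (congrFun hfg' i)
      rw [hστ]
    · intro p hp
      rw [Finset.mem_filter] at hp
      have hinj : Function.Injective p := hp.2
      set S : Finset (Fin N) := Finset.univ.image p with hSdef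
      have hS : S.card = m := by
        rw [hSdef, Finset.card_image_of_injective _ hinj, Finset.card_univ, Fintype.card_fin]
      set f : Fin m → Fin N := fun i => S.orderEmbOfFin hS i with hfdef
      have hmem : ∀ i, p i ∈ S := fun i => Finset.mem_image_of_mem _ (Finset.mem_univ i)
      set g : Fin m → Fin m := fun i => (S.orderIsoOfFin hS).symm ⟨p i, hmem i⟩ with hgdef
      have hginj : Function.Injective g := by
        intro a b hab
        apply hinj
        exact Subtype.ext_iff.mp ((S.orderIsoOfFin hS).symm.injective hab)
      have hgbij : Function.Bijective g := Finite.injective_iff_bijective.mp hginj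
      refine ⟨⟨f, Equiv.ofBijective g hgbij⟩, ?_, ?_⟩
      · rw [Finset.mem_product]
        constructor
        · exact mem_monoMaps.mpr (S.orderEmbOfFin hS).strictMono
        · exact Finset.mem_univ _
      · funext i
        show f (g i) = p i
        rw [hfdef, hgdef]
        show ((S.orderIsoOfFin hS) ((S.orderIsoOfFin hS).symm ⟨p i, hmem i⟩) : Fin N) = p i
        rw [OrderIso.apply_symm_apply]
    · rintro ⟨f, σ⟩ _
      rfl
  · -- compute the product sum
    rw [Finset.sum_product]
    refine Finset.sum_congr rfl fun f hf => ?_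
    have hdet : ∀ σ : Equiv.Perm (Fin m),
        (M.submatrix id (f ∘ σ)).det = (Equiv.Perm.sign σ : R) * (M.submatrix id f).det := by
      intro σ
      rw [show M.submatrix id (f ∘ σ) = (M.submatrix id f).submatrix id σ by
        rw [submatrix_submatrix]; rfl]
      exact det_permute' σ _
    calc (M.submatrix id f).det * (Q.submatrix f id).det
        = (M.submatrix id f).det * ∑ σ : Equiv.Perm (Fin m),
            (Equiv.Perm.sign σ : R) * ∏ i, Q (f (σ i)) i := by
          rw [det_apply' (Q.submatrix f id)]
          rfl
      _ = ∑ σ : Equiv.Perm (Fin m),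
            (M.submatrix id (f ∘ σ)).det * ∏ i, Q ((f ∘ σ) i) i := by
          rw [Finset.mul_sum]
          refine Finset.sum_congr rfl fun σ _ => ?_
          rw [hdet σ]
          ring_nf
          rfl

end CB


section Bridge

variable {N m : ℕ}

lemma pminor_image {A : Matrix (Fin N) (Fin N) ℝ} {f : Fin m → Fin N} (hf : StrictMono f) :
    pminor A (Finset.univ.image f) = (A.submatrix f f).det := by
  set K := Finset.univ.image f with hK
  have hmem : ∀ i, f i ∈ K := fun i => Finset.mem_image_of_mem _ (Finset.mem_univ i)
  have hbij : Function.Bijective (fun i : Fin m => (⟨f i, hmem i⟩ : K)) := by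
    constructor
    · intro a b hab
      exact hf.injective (Subtype.ext_iff.mp hab)
    · rintro ⟨x, hx⟩
      rw [hK, Finset.mem_image] at hx
      obtain ⟨i, _, hi⟩ := hx
      exact ⟨i, Subtype.ext hi⟩
  set e : Fin m ≃ K := Equiv.ofBijective _ hbij with he
  have := Matrix.det_submatrix_equiv_self e (A.submatrix (Subtype.val : K → Fin N) Subtype.val)
  rw [pminor, ← this, Matrix.submatrix_submatrix]
  congr 1

lemma sum_powersetCard_eq_sum_monoMaps (G : Finset (Fin N) → ℝ) :
    ∑ K ∈ Finset.powersetCard m (Finset.univ : Finset (Fin N)), G K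
      = ∑ f ∈ monoMaps m N, G (Finset.univ.image f) := by
  refine (Finset.sum_bij (fun f _ => Finset.univ.image f) ?_ ?_ ?_ ?_).symm
  · intro f hf
    rw [Finset.mem_powersetCard]
    exact ⟨Finset.subset_univ _,
      by rw [Finset.card_image_of_injective _ (mem_monoMaps.mp hf).injective,
        Finset.card_univ, Fintype.card_fin]⟩
  · intro f hf g hg hfg
    have hf' : StrictMono f := mem_monoMaps.mp hf
    have hg' : StrictMono g := mem_monoMaps.mp hg
    have hrange : Set.range f = Set.range g := by
      have := congrArg (fun (s : Finset (Fin N)) => (s : Set (Fin N))) hfg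
      simpa [Finset.coe_image, Set.image_univ] using this
    haveI : WellFoundedLT (Fin m) := inferInstance
    exact (hf'.range_inj hg').mp hrange
  · intro K hK
    rw [Finset.mem_powersetCard] at hK
    have hKc : K.card = m := hK.2
    refine ⟨fun i => K.orderEmbOfFin hKc i, mem_monoMaps.mpr (K.orderEmbOfFin hKc).strictMono, ?_⟩
    apply Finset.coe_injective
    rw [Finset.coe_image, Finset.coe_univ, Set.image_univ]
    exact Finset.range_orderEmbOfFin K hKc
  · intro f _
    rfl

lemma prod_image_eq {g : Fin N → ℝ} {f : Fin m → Fin N} (hf : StrictMono f) :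
    ∏ s ∈ Finset.univ.image f, g s = ∏ i, g (f i) :=
  Finset.prod_image (fun a _ b _ h => hf.injective h)

end Bridge

section Spectral

variable {n : ℕ}

lemma esum_eq_esymm {m : ℕ} (A : Matrix (Fin n) (Fin n) ℝ) (hA : A.IsHermitian) :
    Esum A m = ∑ K ∈ Finset.powersetCard m (Finset.univ : Finset (Fin n)),
      ∏ s ∈ K, hA.eigenvalues s := by
  classical
  set U : Matrix (Fin n) (Fin n) ℝ := (Matrix.IsHermitian.eigenvectorUnitary hA : Matrix (Fin n) (Fin n) ℝ) with hU
  set lam : Fin n → ℝ := hA.eigenvalues with hlam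
  have hdiag : (Matrix.diagonal ((RCLike.ofReal : ℝ → ℝ) ∘ lam)) = Matrix.diagonal lam := by
    congr 1
  have hspec : A = U * ((Matrix.diagonal lam) * (star U)) := by
    have h := hA.spectral_theorem
    rw [Unitary.conjStarAlgAut_apply, Matrix.mul_assoc, hdiag] at h
    exact h
  have hUnit : star U * U = 1 := by
    have := (Matrix.IsHermitian.eigenvectorUnitary hA).2
    rw [Matrix.mem_unitaryGroup_iff'] at this
    exact this
  have hstarU : ∀ (f g : Fin m → Fin n),
      (star U).submatrix f g = (U.submatrix g f)ᵀ := by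
    intro f g
    ext a b
    simp [Matrix.star_eq_conjTranspose, Matrix.conjTranspose_apply]
  -- transport both sides to sums over monotone maps
  rw [Esum, sum_powersetCard_eq_sum_monoMaps (pminor A),
    sum_powersetCard_eq_sum_monoMaps (fun K => ∏ s ∈ K, lam s)]
  have key : ∀ f ∈ monoMaps m n, pminor A (Finset.univ.image f)
      = ∑ g ∈ monoMaps m n, (∏ i, lam (g i)) * (U.submatrix f g).det ^ 2 := by
    intro f hf
    have hfm : StrictMono f := mem_monoMaps.mp hf
    rw [pminor_image hfm]
    have h1 : A.submatrix f f
        = (U.submatrix f id) * (((Matrix.diagonal lam) * (star U)).submatrix id f) := by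
      rw [← Matrix.submatrix_mul _ _ _ id _ Function.bijective_id, ← hspec]
    rw [h1, cauchy_binet]
    refine Finset.sum_congr rfl fun g hg => ?_
    rw [Matrix.submatrix_submatrix, Matrix.submatrix_submatrix]
    simp only [Function.comp_id, Function.id_comp]
    have h2 : ((Matrix.diagonal lam) * (star U)).submatrix g f
        = Matrix.diagonal (lam ∘ g) * ((star U).submatrix g f) := by
      ext a b
      simp [Matrix.diagonal_mul, Matrix.submatrix_apply]
    rw [h2, Matrix.det_mul, Matrix.det_diagonal, hstarU g f, Matrix.det_transpose]
    ring_nf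
    rfl
  rw [Finset.sum_congr rfl key, Finset.sum_comm]
  refine Finset.sum_congr rfl fun g hg => ?_
  have hgm : StrictMono g := mem_monoMaps.mp hg
  rw [prod_image_eq hgm, ← Finset.mul_sum]
  have inner : ∑ f ∈ monoMaps m n, (U.submatrix f g).det ^ 2 = 1 := by
    have h3 : ((star U * U).submatrix g g : Matrix (Fin m) (Fin m) ℝ)
        = ((star U).submatrix g id) * (U.submatrix id g) := by
      rw [← Matrix.submatrix_mul _ _ _ id _ Function.bijective_id]
    have h4 : (((star U).submatrix g id) * (U.submatrix id g)).det = 1 := by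
      rw [← h3, hUnit, Matrix.submatrix_one _ hgm.injective, Matrix.det_one]
    rw [cauchy_binet] at h4
    rw [← h4]
    refine Finset.sum_congr rfl fun f hf => ?_
    rw [Matrix.submatrix_submatrix, Matrix.submatrix_submatrix]
    simp only [Function.comp_id, Function.id_comp]
    rw [hstarU g f, Matrix.det_transpose, sq]
  rw [inner, mul_one]

end Spectral


lemma conjTranspose_real {a b : Type*} (M : Matrix a b ℝ) : Mᴴ = Mᵀ := by
  ext i j
  simp [Matrix.conjTranspose_apply]

section Schur

variable {n : ℕ} {A : Matrix (Fin n) (Fin n) ℝ} {J : Finset (Fin n)}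

lemma crossApprox_eq (A : Matrix (Fin n) (Fin n) ℝ) (J : Finset (Fin n)) :
    crossApprox A J = A.submatrix id (Subtype.val : J → Fin n) *
      (A.submatrix (Subtype.val : J → Fin n) (Subtype.val : J → Fin n))⁻¹ *
      A.submatrix (Subtype.val : J → Fin n) id := rfl

lemma pminor_eq (A : Matrix (Fin n) (Fin n) ℝ) (J : Finset (Fin n)) :
    pminor A J = (A.submatrix (Subtype.val : J → Fin n)
      (Subtype.val : J → Fin n)).det := rfl

lemma crossApprox_apply' (A : Matrix (Fin n) (Fin n) ℝ) (J : Finset (Fin n)) (i j : Fin n) :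
    crossApprox A J i j = ∑ b : J, (∑ a : J,
      A i (a : Fin n) * (A.submatrix (Subtype.val : J → Fin n)
        (Subtype.val : J → Fin n))⁻¹ a b) * A (b : Fin n) j := by
  rw [crossApprox_eq, Matrix.mul_apply]
  refine Finset.sum_congr rfl fun b _ => ?_
  rw [Matrix.mul_apply]
  rfl

lemma crossApprox_apply_mem (hd : pminor A J ≠ 0) {i : Fin n} (hi : i ∈ J) (j : Fin n) :
    crossApprox A J i j = A i j := by
  classical
  have hdet : IsUnit (A.submatrix (Subtype.val : J → Fin n)
      (Subtype.val : J → Fin n)).det := isUnit_iff_ne_zero.mpr hd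
  have hCC : A.submatrix (Subtype.val : J → Fin n) (Subtype.val : J → Fin n) *
      (A.submatrix (Subtype.val : J → Fin n) (Subtype.val : J → Fin n))⁻¹ = 1 :=
    Matrix.mul_nonsing_inv _ hdet
  rw [crossApprox_apply']
  have hrow : ∀ b : J, (∑ a : J,
      A i (a : Fin n) * (A.submatrix (Subtype.val : J → Fin n)
        (Subtype.val : J → Fin n))⁻¹ a b)
      = (1 : Matrix J J ℝ) ⟨i, hi⟩ b := by
    intro b
    rw [← hCC, Matrix.mul_apply]
    rfl
  simp only [hrow]
  simp [Matrix.one_apply]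

lemma sub_crossApprox_row_zero (hd : pminor A J ≠ 0) {i : Fin n} (hi : i ∈ J) (j : Fin n) :
    (A - crossApprox A J) i j = 0 := by
  simp [crossApprox_apply_mem hd hi j]

lemma pminor_insert (hd : pminor A J ≠ 0) {i : Fin n} (hi : i ∉ J) :
    pminor A (insert i J) = pminor A J * ((A - crossApprox A J) i i) := by
  classical
  have hdet : IsUnit (A.submatrix (Subtype.val : J → Fin n)
      (Subtype.val : J → Fin n)).det := isUnit_iff_ne_zero.mpr hd
  haveI : Invertible (A.submatrix (Subtype.val : J → Fin n) (Subtype.val : J → Fin n)) :=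
    Matrix.invertibleOfIsUnitDet _ hdet
  have hmem1 : ∀ a : J, (a : Fin n) ∈ insert i J := fun a => Finset.mem_insert_of_mem a.2
  have hmemi : i ∈ insert i J := Finset.mem_insert_self i J
  have hbij : Function.Bijective (Sum.elim
      (fun a : J => (⟨(a : Fin n), hmem1 a⟩ : {x // x ∈ insert i J}))
      (fun _ : Unit => (⟨i, hmemi⟩ : {x // x ∈ insert i J}))) := by
    constructor
    · rintro (a | ⟨⟩) (b | ⟨⟩) hab
      · have h1 : (a : Fin n) = (b : Fin n) := by
          simpa using congrArg Subtype.val hab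
        exact congrArg Sum.inl (Subtype.ext h1)
      · have h1 : (a : Fin n) = i := by
          simpa using congrArg Subtype.val hab
        exact absurd (h1 ▸ a.2) hi
      · have h1 : i = (b : Fin n) := by
          simpa using congrArg Subtype.val hab
        exact absurd (h1 ▸ b.2) hi
      · rfl
    · rintro ⟨x, hx⟩
      rw [Finset.mem_insert] at hx
      rcases eq_or_ne x i with rfl | hxi
      · exact ⟨Sum.inr ⟨⟩, rfl⟩
      · exact ⟨Sum.inl ⟨x, hx.resolve_left hxi⟩, rfl⟩
  have hdetK : pminor A (insert i J)
      = ((A.submatrix (Subtype.val : {x // x ∈ insert i J} → Fin n)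
          (Subtype.val : {x // x ∈ insert i J} → Fin n)).submatrix
            (Equiv.ofBijective _ hbij) (Equiv.ofBijective _ hbij)).det := by
    rw [pminor_eq, Matrix.det_submatrix_equiv_self]
  have hblocks : (A.submatrix (Subtype.val : {x // x ∈ insert i J} → Fin n)
        (Subtype.val : {x // x ∈ insert i J} → Fin n)).submatrix
          (Equiv.ofBijective _ hbij) (Equiv.ofBijective _ hbij)
      = Matrix.fromBlocks (A.submatrix (Subtype.val : J → Fin n) (Subtype.val : J → Fin n))
          (fun (a : J) (_ : Unit) => A (a : Fin n) i)
          (fun (_ : Unit) (a : J) => A i (a : Fin n)) (fun _ _ => A i i) := by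
    ext x y
    rcases x with a | ⟨⟩ <;> rcases y with b | ⟨⟩ <;> rfl
  have hfb := Matrix.det_fromBlocks₁₁ (A.submatrix (Subtype.val : J → Fin n) (Subtype.val : J → Fin n))
    (fun (a : J) (_ : Unit) => A (a : Fin n) i) (fun (_ : Unit) (a : J) => A i (a : Fin n)) (fun _ _ => A i i)
  rw [hdetK, hblocks, hfb]
  rw [← pminor_eq]
  congr 1
  rw [Matrix.det_unique]
  simp only [Matrix.sub_apply, Matrix.mul_apply, Matrix.invOf_eq_nonsing_inv]
  rw [crossApprox_apply']
  rfl

lemma sub_crossApprox_posSemidef (hA : A.PosSemidef) (hd : pminor A J ≠ 0) :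
    (A - crossApprox A J).PosSemidef := by
  classical
  open scoped MatrixOrder Matrix.Norms.L2Operator in
  obtain ⟨B, hB'⟩ := CStarAlgebra.nonneg_iff_eq_star_mul_self.mp hA.nonneg
  have hB : A = Bᵀ * B := by rw [hB', Matrix.star_eq_conjTranspose, conjTranspose_real]
  have hdet : IsUnit (A.submatrix (Subtype.val : J → Fin n)
      (Subtype.val : J → Fin n)).det := isUnit_iff_ne_zero.mpr hd
  obtain ⟨W, hW⟩ : ∃ W' : Matrix (Fin n) J ℝ, W' = B.submatrix id (Subtype.val : J → Fin n) :=
    ⟨_, rfl⟩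
  obtain ⟨C, hC⟩ : ∃ C' : Matrix J J ℝ,
      C' = A.submatrix (Subtype.val : J → Fin n) (Subtype.val : J → Fin n) := ⟨_, rfl⟩
  have hdetC : IsUnit C.det := by rw [hC]; exact hdet
  have hCW : C = Wᵀ * W := by
    rw [hC, hW, hB, Matrix.submatrix_mul _ _ _ id _ Function.bijective_id,
      Matrix.transpose_submatrix]
  have hcol : A.submatrix id (Subtype.val : J → Fin n) = Bᵀ * W := by
    rw [hW, hB, Matrix.submatrix_mul _ _ _ id _ Function.bijective_id]
    rfl
  have hrow : A.submatrix (Subtype.val : J → Fin n) id = Wᵀ * B := by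
    rw [hW, hB, Matrix.submatrix_mul _ _ _ id _ Function.bijective_id,
      Matrix.transpose_submatrix]
    rfl
  obtain ⟨P, hP⟩ : ∃ P' : Matrix (Fin n) (Fin n) ℝ, P' = W * C⁻¹ * Wᵀ := ⟨_, rfl⟩
  have hCt : Cᵀ = C := by rw [hCW, Matrix.transpose_mul, Matrix.transpose_transpose]
  have hPt : Pᵀ = P := by
    rw [hP, Matrix.transpose_mul, Matrix.transpose_mul, Matrix.transpose_transpose,
      Matrix.transpose_nonsing_inv, hCt, Matrix.mul_assoc]
  have hPP : P * P = P := by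
    rw [hP]
    simp only [Matrix.mul_assoc]
    rw [← Matrix.mul_assoc Wᵀ W, ← hCW, ← Matrix.mul_assoc C⁻¹ C,
      Matrix.nonsing_inv_mul C hdetC, Matrix.one_mul]
  have hcross : A - crossApprox A J = Bᵀ * (1 - P) * B := by
    have hexp : Bᵀ * (1 - P) * B = Bᵀ * B - Bᵀ * (P * B) := by
      rw [mul_sub, mul_one, sub_mul]
      simp only [Matrix.mul_assoc]
    have hcr : crossApprox A J = Bᵀ * (P * B) := by
      rw [crossApprox_eq, hcol, hrow, ← hC, hP]
      simp only [Matrix.mul_assoc]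
    rw [hexp, hcr, ← hB]
  have h1 : (1 - P)ᵀ = 1 - P := by
    rw [Matrix.transpose_sub, Matrix.transpose_one, hPt]
  have h2 : (1 - P) * (1 - P) = 1 - P := by
    rw [sub_mul, one_mul, mul_sub, mul_one, hPP]
    abel
  have hfact : Bᵀ * (1 - P) * B = ((1 - P) * B)ᵀ * ((1 - P) * B) := by
    rw [Matrix.transpose_mul, h1]
    calc Bᵀ * (1 - P) * B = Bᵀ * ((1 - P) * (1 - P)) * B := by rw [h2]
      _ = Bᵀ * (1 - P) * ((1 - P) * B) := by simp only [Matrix.mul_assoc]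
  rw [hcross, hfact, ← conjTranspose_real]
  exact Matrix.posSemidef_conjTranspose_mul_self _

lemma pminor_mul_trace (hd : pminor A J ≠ 0) :
    pminor A J * Matrix.trace (A - crossApprox A J)
      = ∑ i ∈ Jᶜ, pminor A (insert i J) := by
  classical
  have t1 : Matrix.trace (A - crossApprox A J) = ∑ i, (A - crossApprox A J) i i := rfl
  have t2 : ∑ i ∈ Jᶜ, (A - crossApprox A J) i i = ∑ i, (A - crossApprox A J) i i := by
    refine Finset.sum_subset (Finset.subset_univ _) ?_
    intro x _ hx
    have hxJ : x ∈ J := by simpa using hx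
    exact sub_crossApprox_row_zero hd hxJ x
  rw [t1, ← t2, Finset.mul_sum]
  refine Finset.sum_congr rfl fun i hi => ?_
  rw [pminor_insert hd (by simpa using hi)]

end Schur


lemma psd_det_nonneg {m : Type*} [Fintype m] [DecidableEq m] {M : Matrix m m ℝ}
    (hM : M.PosSemidef) : 0 ≤ M.det := by
  rw [hM.1.det_eq_prod_eigenvalues]
  refine Finset.prod_nonneg fun i _ => ?_
  simpa using hM.eigenvalues_nonneg i

lemma psd_diag_nonneg {n : ℕ} {M : Matrix (Fin n) (Fin n) ℝ} (hM : M.PosSemidef) (i : Fin n) :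
    0 ≤ M i i := by
  have h := psd_det_nonneg (hM.submatrix (fun _ : Fin 1 => i))
  rwa [Matrix.det_fin_one] at h

lemma psd_entry_sq_le {n : ℕ} {M : Matrix (Fin n) (Fin n) ℝ} (hM : M.PosSemidef) (i j : Fin n) :
    (M i j) ^ 2 ≤ M i i * M j j := by
  rcases eq_or_ne i j with rfl | hij
  · rw [sq]
  · have h2 := psd_det_nonneg (hM.submatrix ![i, j])
    rw [Matrix.det_fin_two] at h2
    simp only [Matrix.submatrix_apply, Matrix.cons_val_zero, Matrix.cons_val_one,
      Matrix.head_cons] at h2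
    have hsym : M j i = M i j := by simpa using hM.1.apply i j
    rw [hsym] at h2
    nlinarith [h2]

lemma frob_le_trace {n : ℕ} {M : Matrix (Fin n) (Fin n) ℝ} (hM : M.PosSemidef) :
    frobNorm M ≤ Matrix.trace M := by
  have htr : Matrix.trace M = ∑ i, M i i := rfl
  have htrnn : 0 ≤ Matrix.trace M := by
    rw [htr]; exact Finset.sum_nonneg fun i _ => psd_diag_nonneg hM i
  have h1 : ∑ i, ∑ j, (M i j) ^ 2 ≤ (Matrix.trace M) ^ 2 := by
    rw [htr, sq, Finset.sum_mul_sum]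
    refine Finset.sum_le_sum fun i _ => Finset.sum_le_sum fun j _ => psd_entry_sq_le hM i j
  calc frobNorm M ≤ Real.sqrt ((Matrix.trace M) ^ 2) := Real.sqrt_le_sqrt h1
    _ = Matrix.trace M := by rw [Real.sqrt_sq htrnn]


lemma sortedDesc_eq_comp {m : ℕ} (f : Fin m → ℝ) :
    sortedDesc f = f ∘ (Tuple.sort fun j => -f j) := by
  funext i
  simp [sortedDesc]

lemma sortedDesc_antitone {m : ℕ} (f : Fin m → ℝ) : Antitone (sortedDesc f) := by
  have h := Tuple.monotone_sort (fun j => -f j)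
  intro a b hab
  have h2 := h hab
  simp only [Function.comp_apply] at h2
  rw [sortedDesc_eq_comp]
  simp only [Function.comp_apply]
  linarith

/-- permutation invariance of elementary-symmetric-type sums -/
lemma sum_powersetCard_perm {n m : ℕ} (g : Fin n → ℝ) (σ : Equiv.Perm (Fin n)) :
    ∑ K ∈ Finset.powersetCard m (Finset.univ : Finset (Fin n)), ∏ s ∈ K, g (σ s)
      = ∑ K ∈ Finset.powersetCard m (Finset.univ : Finset (Fin n)), ∏ s ∈ K, g s := by
  refine Finset.sum_bij (fun K _ => K.image σ) ?_ ?_ ?_ ?_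
  · intro K hK
    rw [Finset.mem_powersetCard] at hK ⊢
    exact ⟨Finset.subset_univ _, by rw [Finset.card_image_of_injective _ σ.injective, hK.2]⟩
  · intro K hK L hL hKL
    have := congrArg (Finset.image σ.symm) hKL
    rwa [Finset.image_image, Finset.image_image,
      show (σ.symm : Fin n → Fin n) ∘ σ = id by funext x; simp,
      Finset.image_id, Finset.image_id] at this
  · intro K hK
    refine ⟨K.image σ.symm, ?_, ?_⟩
    · rw [Finset.mem_powersetCard] at hK ⊢
      exact ⟨Finset.subset_univ _,
        by rw [Finset.card_image_of_injective _ σ.symm.injective, hK.2]⟩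
    · show (K.image (σ.symm : Fin n → Fin n)).image σ = K
      rw [Finset.image_image, show (σ : Fin n → Fin n) ∘ σ.symm = id by funext x; simp,
        Finset.image_id]
  · intro K hK
    exact (Finset.prod_image (fun a _ b _ h => σ.injective h)).symm

/-- the maximum of a (r+1)-subset of `Fin n` has value at least `r`. -/
lemma max'_val_ge {n r : ℕ} {K : Finset (Fin n)} (hK : K.card = r + 1)
    (hne : K.Nonempty) : r ≤ ((K.max' hne : Fin n) : ℕ) := by
  have hsub : K.image (fun x : Fin n => (x : ℕ)) ⊆ Finset.range (((K.max' hne : Fin n) : ℕ) + 1) := by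
    intro x hx
    rw [Finset.mem_image] at hx
    obtain ⟨y, hy, rfl⟩ := hx
    rw [Finset.mem_range, Nat.lt_succ_iff]
    exact Fin.le_iff_val_le_val.mp (K.le_max' y hy)
  have hcard := Finset.card_le_card hsub
  rw [Finset.card_image_of_injective _ Fin.val_injective, hK, Finset.card_range] at hcard
  omega

/-- tail bound: `e_{r+1}(mu) <= e_r(mu) * sum_{s >= r} mu_s` for antitone nonnegative `mu`. -/
lemma esymm_succ_le {n r : ℕ} {μ : Fin n → ℝ} (hpos : ∀ i, 0 ≤ μ i) :
    ∑ K ∈ Finset.powersetCard (r + 1) (Finset.univ : Finset (Fin n)), ∏ s ∈ K, μ s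
      ≤ (∑ K ∈ Finset.powersetCard r (Finset.univ : Finset (Fin n)), ∏ s ∈ K, μ s)
        * (∑ s ∈ Finset.univ.filter (fun s : Fin n => r ≤ (s : ℕ)), μ s) := by
  classical
  rcases Nat.eq_zero_or_pos n with rfl | hn
  · simp only [Finset.univ_eq_empty, Finset.filter_empty, Finset.sum_empty, mul_zero]
    refine le_of_eq (Finset.sum_eq_zero fun K hK => ?_)
    rw [Finset.mem_powersetCard] at hK
    have hKe : K = ∅ := Finset.subset_empty.mp hK.1
    simp [hKe] at hK
  set T := (Finset.univ.filter (fun s : Fin n => r ≤ (s : ℕ)))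
    ×ˢ Finset.powersetCard r (Finset.univ : Finset (Fin n)) with hT
  set Φ : Finset (Fin n) → (Fin n) × Finset (Fin n) := fun K =>
    if h : K.Nonempty then (K.max' h, K.erase (K.max' h)) else (⟨0, hn⟩, ∅) with hΦ
  have himg : ∀ K ∈ Finset.powersetCard (r + 1) (Finset.univ : Finset (Fin n)),
      (Φ K ∈ T ∧ ∏ s ∈ K, μ s = μ (Φ K).1 * ∏ s ∈ (Φ K).2, μ s)
        ∧ insert (Φ K).1 (Φ K).2 = K := by
    intro K hK
    rw [Finset.mem_powersetCard] at hK
    have hne : K.Nonempty := Finset.card_pos.mp (by omega)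
    have hmax : K.max' hne ∈ K := K.max'_mem hne
    simp only [hΦ, dif_pos hne]
    refine ⟨⟨?_, ?_⟩, Finset.insert_erase hmax⟩
    · rw [Finset.mem_product]
      constructor
      · simp only [Finset.mem_filter]
        exact ⟨Finset.mem_univ _, max'_val_ge hK.2 hne⟩
      · rw [Finset.mem_powersetCard]
        refine ⟨Finset.subset_univ _, ?_⟩
        rw [Finset.card_erase_of_mem hmax, hK.2]
        omega
    · exact (Finset.mul_prod_erase K μ hmax).symm
  have hinj : ∀ K ∈ Finset.powersetCard (r + 1) (Finset.univ : Finset (Fin n)),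
      ∀ L ∈ Finset.powersetCard (r + 1) (Finset.univ : Finset (Fin n)), Φ K = Φ L → K = L := by
    intro K hK L hL hKL
    rw [← (himg K hK).2, ← (himg L hL).2, hKL]
  calc ∑ K ∈ Finset.powersetCard (r + 1) (Finset.univ : Finset (Fin n)), ∏ s ∈ K, μ s
      = ∑ K ∈ Finset.powersetCard (r + 1) (Finset.univ : Finset (Fin n)),
          μ (Φ K).1 * ∏ s ∈ (Φ K).2, μ s :=
        Finset.sum_congr rfl fun K hK => ((himg K hK).1).2
    _ = ∑ p ∈ (Finset.powersetCard (r + 1) (Finset.univ : Finset (Fin n))).image Φ,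
          μ p.1 * ∏ s ∈ p.2, μ s := by rw [Finset.sum_image hinj]
    _ ≤ ∑ p ∈ T, μ p.1 * ∏ s ∈ p.2, μ s := by
        refine Finset.sum_le_sum_of_subset_of_nonneg ?_ ?_
        · intro p hp
          rw [Finset.mem_image] at hp
          obtain ⟨K, hK, rfl⟩ := hp
          exact ((himg K hK).1).1
        · intro p _ _
          exact mul_nonneg (hpos _) (Finset.prod_nonneg fun s _ => hpos s)
    _ = (∑ s ∈ Finset.univ.filter (fun s : Fin n => r ≤ (s : ℕ)), μ s)
        * (∑ K ∈ Finset.powersetCard r (Finset.univ : Finset (Fin n)), ∏ s ∈ K, μ s) := by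
        rw [hT, Finset.sum_product, Finset.sum_mul_sum]
    _ = _ := mul_comm _ _

/-- counting identity. -/
lemma sum_insert_counting {n r : ℕ} (F : Finset (Fin n) → ℝ) :
    ∑ J ∈ Finset.powersetCard r (Finset.univ : Finset (Fin n)), ∑ i ∈ Jᶜ, F (insert i J)
      = (r + 1 : ℝ) * ∑ K ∈ Finset.powersetCard (r + 1) (Finset.univ : Finset (Fin n)), F K := by
  classical
  have hrhs : ∀ K ∈ Finset.powersetCard (r + 1) (Finset.univ : Finset (Fin n)),
      (r + 1 : ℝ) * F K = ∑ _i ∈ K, F K := by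
    intro K hK
    rw [Finset.mem_powersetCard] at hK
    rw [Finset.sum_const, hK.2, nsmul_eq_mul]
    push_cast
    ring
  rw [Finset.mul_sum, Finset.sum_congr rfl hrhs]
  rw [Finset.sum_sigma', Finset.sum_sigma']
  refine Finset.sum_bij (fun x _ => (⟨insert x.2 x.1, x.2⟩ :
    (_ : Finset (Fin n)) × Fin n)) ?_ ?_ ?_ ?_
  · rintro ⟨J, i⟩ hx
    rw [Finset.mem_sigma] at hx ⊢
    obtain ⟨hJ, hi⟩ := hx
    rw [Finset.mem_powersetCard] at hJ
    have hiJ : i ∉ J := by simpa using hi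
    refine ⟨?_, Finset.mem_insert_self _ _⟩
    rw [Finset.mem_powersetCard]
    exact ⟨Finset.subset_univ _, by rw [Finset.card_insert_of_notMem hiJ, hJ.2]⟩
  · rintro ⟨J, i⟩ hx ⟨L, j⟩ hy hxy
    rw [Finset.mem_sigma] at hx hy
    have hiJ : i ∉ J := by simpa using hx.2
    have hjL : j ∉ L := by simpa using hy.2
    have h1 : insert i J = insert j L := congrArg Sigma.fst hxy
    have h2 : i = j := by
      have := congrArg Sigma.snd hxy
      simpa using this
    subst h2
    have h3 : J = L := by
      have := congrArg (fun s => Finset.erase s i) h1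
      simpa [Finset.erase_insert hiJ, Finset.erase_insert hjL] using this
    subst h3
    rfl
  · rintro ⟨K, i⟩ hx
    rw [Finset.mem_sigma] at hx
    obtain ⟨hK, hiK⟩ := hx
    rw [Finset.mem_powersetCard] at hK
    refine ⟨⟨K.erase i, i⟩, ?_, ?_⟩
    · rw [Finset.mem_sigma]
      constructor
      · rw [Finset.mem_powersetCard]
        exact ⟨Finset.subset_univ _, by rw [Finset.card_erase_of_mem hiK, hK.2]; omega⟩

      · simpa using Finset.not_mem_erase i K
    · simp [Finset.insert_erase hiK]
  · rintro ⟨J, i⟩ _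
    rfl


lemma pminor_nonneg {n : ℕ} {A : Matrix (Fin n) (Fin n) ℝ} (hA : A.PosSemidef)
    (J : Finset (Fin n)) : 0 ≤ pminor A J :=
  psd_det_nonneg (hA.submatrix (Subtype.val : J → Fin n))

lemma card_tail_filter {n r : ℕ} (hrn : r ≤ n) :
    (Finset.univ.filter (fun s : Fin n => r ≤ (s : ℕ))).card = n - r := by
  classical
  have h1 : (Finset.univ.filter (fun s : Fin n => (s : ℕ) < r))
      = Finset.map (Fin.castLEEmb hrn) Finset.univ := by
    ext s
    simp only [Finset.mem_filter, Finset.mem_univ, true_and, Finset.mem_map]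
    constructor
    · intro hs
      exact ⟨⟨(s : ℕ), hs⟩, by ext; simp [Fin.castLEEmb]⟩
    · rintro ⟨i, _, rfl⟩
      simpa [Fin.castLEEmb] using i.2
  have h2 := Finset.card_filter_add_card_filter_not
    (s := (Finset.univ : Finset (Fin n))) (p := fun s : Fin n => (s : ℕ) < r)
  have h3 : (Finset.univ.filter (fun s : Fin n => ¬ (s : ℕ) < r))
      = Finset.univ.filter (fun s : Fin n => r ≤ (s : ℕ)) := by
    apply Finset.filter_congr
    intro s _
    simp [not_lt]
  rw [h3, h1, Finset.card_map, Finset.card_univ, Fintype.card_fin, Finset.card_univ,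
    Fintype.card_fin] at h2
  omega


/-- For `A` SPSD of rank `k` and `1 ≤ r ≤ k`, there is an index set `J*` of
cardinality `r` with `A(J*,J*)` invertible and
`‖A - A_{J*}‖_F ≤ √(n-r) (r+1) √(∑_{s=r+1}^{n} σ_s(A)²)` (0-based: indices `s ≥ r`). -/
theorem exists_quasi_optimal_cross_frobenius {n r : ℕ}
    (A : Matrix (Fin n) (Fin n) ℝ) (hA : A.PosSemidef)
    (hr : 1 ≤ r) (hrk : r ≤ A.rank) :
    ∃ J : Finset (Fin n), J.card = r ∧ pminor A J ≠ 0 ∧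
      frobNorm (A - crossApprox A J) ≤
        Real.sqrt ((n : ℝ) - r) * (r + 1 : ℝ) *
          Real.sqrt (∑ s ∈ Finset.univ.filter (fun s : Fin n => r ≤ (s : ℕ)),
            (sortedDesc hA.1.eigenvalues s) ^ 2) := by
  classical
  set lam : Fin n → ℝ := hA.1.eigenvalues with hlam
  set σ : Equiv.Perm (Fin n) := Tuple.sort (fun j => -lam j) with hσ
  set μ : Fin n → ℝ := sortedDesc lam with hμ
  have hμcomp : ∀ i, μ i = lam (σ i) := by
    intro i
    rw [hμ, sortedDesc_eq_comp]
    rfl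
  have hlamnn : ∀ i, 0 ≤ lam i := fun i => hA.eigenvalues_nonneg i
  have hμnn : ∀ i, 0 ≤ μ i := fun i => by rw [hμcomp]; exact hlamnn _
  have hrn : r ≤ n := by
    calc r ≤ A.rank := hrk
      _ ≤ n := by simpa using A.rank_le_card_width
  -- Esum in terms of eigenvalues, for r and r+1
  have hEr : Esum A r = ∑ K ∈ Finset.powersetCard r (Finset.univ : Finset (Fin n)),
      ∏ s ∈ K, μ s := by
    rw [esum_eq_esymm (m := r) A hA.1, ← sum_powersetCard_perm lam σ]
    refine Finset.sum_congr rfl fun K _ => Finset.prod_congr rfl fun s _ => ?_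
    rw [hμcomp]
  have hEr1 : Esum A (r + 1) = ∑ K ∈ Finset.powersetCard (r + 1)
      (Finset.univ : Finset (Fin n)), ∏ s ∈ K, μ s := by
    rw [esum_eq_esymm (m := r + 1) A hA.1, ← sum_powersetCard_perm lam σ]
    refine Finset.sum_congr rfl fun K _ => Finset.prod_congr rfl fun s _ => ?_
    rw [hμcomp]
  -- positivity of Esum A r
  have hErpos : 0 < Esum A r := by
    rw [hEr]
    have hrank := hA.1.rank_eq_card_non_zero_eigs
    have hcard : r ≤ (Finset.univ.filter (fun i : Fin n => lam (σ i) ≠ 0)).card := by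
      have hc2 : (Finset.univ.filter (fun i : Fin n => lam i ≠ 0)).card
          = Fintype.card {i // lam i ≠ 0} := (Fintype.card_subtype _).symm
      have hc3 : (Finset.univ.filter (fun i : Fin n => lam (σ i) ≠ 0)).card
          = (Finset.univ.filter (fun i : Fin n => lam i ≠ 0)).card := by
        refine Finset.card_bij (fun i _ => σ i) ?_ ?_ ?_
        · intro i hi
          simp only [Finset.mem_filter, Finset.mem_univ, true_and] at hi ⊢
          exact hi
        · intro i _ j _ hij
          exact σ.injective hij
        · intro j hj
          simp only [Finset.mem_filter, Finset.mem_univ, true_and] at hj ⊢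
          exact ⟨σ.symm j, by simpa using hj, by simp⟩
      rw [hc3, hc2, ← hrank]
      exact hrk
    obtain ⟨K, hKsub, hKcard⟩ := Finset.exists_subset_card_eq hcard
    have hKmem : K ∈ Finset.powersetCard r (Finset.univ : Finset (Fin n)) := by
      rw [Finset.mem_powersetCard]
      exact ⟨Finset.subset_univ _, hKcard⟩
    have hKpos : 0 < ∏ s ∈ K, μ s := by
      refine Finset.prod_pos fun s hs => ?_
      have := hKsub hs
      simp only [Finset.mem_filter] at this
      have h0 : μ s = lam (σ s) := hμcomp s
      rw [h0]
      exact lt_of_le_of_ne (hlamnn _) (Ne.symm this.2)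
    refine lt_of_lt_of_le hKpos ?_
    exact Finset.single_le_sum (f := fun K => ∏ s ∈ K, μ s)
      (fun K _ => Finset.prod_nonneg fun s _ => hμnn s) hKmem
  -- selection of a good J
  have hid := sum_insert_counting (F := pminor A) (r := r) (n := n)
  have hsel : ∃ J ∈ Finset.powersetCard r (Finset.univ : Finset (Fin n)),
      0 < pminor A J ∧
      (∑ i ∈ Jᶜ, pminor A (insert i J)) * Esum A r
        ≤ ((r + 1 : ℝ) * Esum A (r + 1)) * pminor A J := by
    by_contra hcon
    push_neg at hcon
    have hweak : ∀ J ∈ Finset.powersetCard r (Finset.univ : Finset (Fin n)),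
        ((r + 1 : ℝ) * Esum A (r + 1)) * pminor A J
          ≤ (∑ i ∈ Jᶜ, pminor A (insert i J)) * Esum A r := by
      intro J hJ
      rcases (pminor_nonneg hA J).lt_or_eq with hpos | heq
      · exact (hcon J hJ hpos).le
      · rw [← heq, mul_zero]
        exact mul_nonneg (Finset.sum_nonneg fun i _ => pminor_nonneg hA _) hErpos.le
    obtain ⟨J0, hJ0mem, hJ0ne⟩ : ∃ J0 ∈ Finset.powersetCard r
        (Finset.univ : Finset (Fin n)), pminor A J0 ≠ 0 := by
      by_contra hno
      push_neg at hno
      have : Esum A r = 0 := Finset.sum_eq_zero hno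
      rw [this] at hErpos
      exact lt_irrefl _ hErpos
    have hJ0pos : 0 < pminor A J0 := lt_of_le_of_ne (pminor_nonneg hA J0) (Ne.symm hJ0ne)
    have hstrict : ∑ J ∈ Finset.powersetCard r (Finset.univ : Finset (Fin n)),
        ((r + 1 : ℝ) * Esum A (r + 1)) * pminor A J
        < ∑ J ∈ Finset.powersetCard r (Finset.univ : Finset (Fin n)),
        (∑ i ∈ Jᶜ, pminor A (insert i J)) * Esum A r := by
      refine Finset.sum_lt_sum hweak ⟨J0, hJ0mem, hcon J0 hJ0mem hJ0pos⟩
    rw [← Finset.sum_mul, ← Finset.mul_sum] at hstrict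
    rw [hid] at hstrict
    rw [show (∑ J ∈ Finset.powersetCard r (Finset.univ : Finset (Fin n)), pminor A J)
      = Esum A r from rfl] at hstrict
    exact lt_irrefl _ hstrict
  obtain ⟨J, hJmem, hJpos, hJkey⟩ := hsel
  rw [Finset.mem_powersetCard] at hJmem
  refine ⟨J, hJmem.2, ne_of_gt hJpos, ?_⟩
  have hdne : pminor A J ≠ 0 := ne_of_gt hJpos
  set S := A - crossApprox A J with hS
  have hSpsd := sub_crossApprox_posSemidef hA hdne
  have htr := pminor_mul_trace hdne
  -- t := trace S satisfies t * Esum A r ≤ (r+1) * Esum A (r+1)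
  have ht1 : Matrix.trace S * Esum A r ≤ (r + 1 : ℝ) * Esum A (r + 1) := by
    have h1 : (pminor A J * Matrix.trace S) * Esum A r
        ≤ ((r + 1 : ℝ) * Esum A (r + 1)) * pminor A J := by
      rw [htr]; exact hJkey
    nlinarith [hJpos]
  -- eigenvalue tail bound
  set τ := ∑ s ∈ Finset.univ.filter (fun s : Fin n => r ≤ (s : ℕ)), μ s with hτ
  have ht2 : Esum A (r + 1) ≤ Esum A r * τ := by
    rw [hEr1, hEr]
    exact esymm_succ_le hμnn
  have ht3 : Matrix.trace S ≤ (r + 1 : ℝ) * τ := by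
    have h2 : Matrix.trace S * Esum A r ≤ ((r + 1 : ℝ) * τ) * Esum A r := by
      calc Matrix.trace S * Esum A r ≤ (r + 1 : ℝ) * Esum A (r + 1) := ht1
        _ ≤ (r + 1 : ℝ) * (Esum A r * τ) := by
            refine mul_le_mul_of_nonneg_left ht2 (by positivity)
        _ = ((r + 1 : ℝ) * τ) * Esum A r := by ring
    exact le_of_mul_le_mul_right h2 hErpos
  -- Cauchy–Schwarz on the tail
  have hτnn : 0 ≤ τ := Finset.sum_nonneg fun s _ => hμnn s
  have hcs : τ ≤ Real.sqrt ((n : ℝ) - r) *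
      Real.sqrt (∑ s ∈ Finset.univ.filter (fun s : Fin n => r ≤ (s : ℕ)), (μ s) ^ 2) := by
    have h1 : τ ^ 2 ≤ ((n : ℝ) - r) *
        ∑ s ∈ Finset.univ.filter (fun s : Fin n => r ≤ (s : ℕ)), (μ s) ^ 2 := by
      have := sq_sum_le_card_mul_sum_sq
        (s := Finset.univ.filter (fun s : Fin n => r ≤ (s : ℕ))) (f := μ)
      rw [card_tail_filter hrn] at this
      calc τ ^ 2 ≤ ((n - r : ℕ) : ℝ) *
            ∑ s ∈ Finset.univ.filter (fun s : Fin n => r ≤ (s : ℕ)), (μ s) ^ 2 := this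
        _ = ((n : ℝ) - r) *
            ∑ s ∈ Finset.univ.filter (fun s : Fin n => r ≤ (s : ℕ)), (μ s) ^ 2 := by
            rw [Nat.cast_sub hrn]
    calc τ = Real.sqrt (τ ^ 2) := (Real.sqrt_sq hτnn).symm
      _ ≤ Real.sqrt (((n : ℝ) - r) *
          ∑ s ∈ Finset.univ.filter (fun s : Fin n => r ≤ (s : ℕ)), (μ s) ^ 2) :=
        Real.sqrt_le_sqrt h1
      _ = _ := by
        rw [Real.sqrt_mul (by
          have : (r : ℝ) ≤ (n : ℝ) := by exact_mod_cast hrn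
          linarith)]
  -- final chain
  calc frobNorm S ≤ Matrix.trace S := frob_le_trace hSpsd
    _ ≤ (r + 1 : ℝ) * τ := ht3
    _ ≤ (r + 1 : ℝ) * (Real.sqrt ((n : ℝ) - r) *
        Real.sqrt (∑ s ∈ Finset.univ.filter (fun s : Fin n => r ≤ (s : ℕ)), (μ s) ^ 2)) := by
        refine mul_le_mul_of_nonneg_left hcs (by positivity)
    _ = Real.sqrt ((n : ℝ) - r) * (r + 1 : ℝ) *
        Real.sqrt (∑ s ∈ Finset.univ.filter (fun s : Fin n => r ≤ (s : ℕ)),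
          (sortedDesc hA.1.eigenvalues s) ^ 2) := by ring
end

section
/- Let A ∈ ℝ^{n×n} be symmetric positive semidefinite and 1 ≤ r < n. Then Σ_{J} det(A(J,J)) · ‖A − A_J‖_* = (r+1) · Σ_{|Ĵ|=r+1} det(A(Ĵ,Ĵ)), where the left-hand sum ranges over all index sets J ⊆ {1,…,n} with |J| = r and A(J,J) invertible, and the right-hand sum ranges over all index sets Ĵ ⊆ {1,…,n} with |Ĵ| = r+1. -/
open Matrix Finset

/-! ### Auxiliary lemmas -/

section NuclearTrace

open Polynomial

variable {m : ℕ}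

lemma my_charpoly_conj (U B V : Matrix (Fin m) (Fin m) ℝ) (hUV : U * V = 1) (hVU : V * U = 1) :
    (U * B * V).charpoly = B.charpoly := by
  have key : (U.map C) * B.charmatrix * (V.map C) = (U * B * V).charmatrix := by
    rw [charmatrix, charmatrix, RingHom.mapMatrix_apply, RingHom.mapMatrix_apply]
    rw [mul_sub, sub_mul]
    congr 1
    · rw [(scalar_commute (X : ℝ[X]) (fun r' => Commute.all _ _) (U.map C)).symm.eq,
        mul_assoc, ← Matrix.map_mul, hUV]
      have h1 : ((1 : Matrix (Fin m) (Fin m) ℝ).map (C : ℝ →+* ℝ[X])) = 1 :=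
        Matrix.map_one _ (map_zero C) (map_one C)
      rw [h1, mul_one]
    · rw [← Matrix.map_mul, ← Matrix.map_mul]
  rw [Matrix.charpoly, Matrix.charpoly, ← key, det_mul, det_mul]
  rw [mul_comm, ← mul_assoc, ← det_mul, ← Matrix.map_mul, hVU]
  have h1 : ((1 : Matrix (Fin m) (Fin m) ℝ).map (C : ℝ →+* ℝ[X])) = 1 :=
    Matrix.map_one _ (map_zero C) (map_one C)
  rw [h1, det_one, one_mul]

lemma my_charpoly_hermitian {B : Matrix (Fin m) (Fin m) ℝ} (hB : B.IsHermitian) :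
    B.charpoly = ∏ i, (X - C (hB.eigenvalues i)) := by
  have hs := hB.spectral_theorem
  rw [Unitary.conjStarAlgAut_apply] at hs
  set U : Matrix (Fin m) (Fin m) ℝ := (hB.eigenvectorUnitary : Matrix (Fin m) (Fin m) ℝ)
  have h1 : U * star U = 1 := Unitary.mul_star_self_of_mem hB.eigenvectorUnitary.2
  have h2 : star U * U = 1 := Unitary.star_mul_self_of_mem hB.eigenvectorUnitary.2
  calc B.charpoly = (U * diagonal (RCLike.ofReal ∘ hB.eigenvalues) * star U).charpoly := by
        rw [← hs]
    _ = (diagonal (RCLike.ofReal ∘ hB.eigenvalues)).charpoly := my_charpoly_conj _ _ _ h1 h2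
    _ = ∏ i, (X - C (hB.eigenvalues i)) := by
        rw [charpoly_of_upperTriangular _ (blockTriangular_diagonal _)]
        simp [RCLike.ofReal_real_eq_id]

lemma my_sq_charpoly_hermitian {B : Matrix (Fin m) (Fin m) ℝ} (hB : B.IsHermitian) :
    (B * B).charpoly = ∏ i, (X - C (hB.eigenvalues i ^ 2)) := by
  have hs := hB.spectral_theorem
  rw [Unitary.conjStarAlgAut_apply] at hs
  set U : Matrix (Fin m) (Fin m) ℝ := (hB.eigenvectorUnitary : Matrix (Fin m) (Fin m) ℝ)
  have h1 : U * star U = 1 := Unitary.mul_star_self_of_mem hB.eigenvectorUnitary.2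
  have h2 : star U * U = 1 := Unitary.star_mul_self_of_mem hB.eigenvectorUnitary.2
  have key : B * B = U * (diagonal (RCLike.ofReal ∘ hB.eigenvalues) *
      diagonal (RCLike.ofReal ∘ hB.eigenvalues)) * star U := by
    conv_lhs => rw [hs]
    rw [show ∀ (D E : Matrix (Fin m) (Fin m) ℝ), (U * D * star U) * (U * E * star U)
        = U * (D * E) * star U from fun D E => by
      simp only [mul_assoc]
      rw [← mul_assoc (star U) U, h2, one_mul]]
  rw [key, my_charpoly_conj _ _ _ h1 h2, diagonal_mul_diagonal,
    charpoly_of_upperTriangular _ (blockTriangular_diagonal _)]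
  simp [RCLike.ofReal_real_eq_id, sq]

lemma my_trace_hermitian {B : Matrix (Fin m) (Fin m) ℝ} (hB : B.IsHermitian) :
    B.trace = ∑ i, hB.eigenvalues i := by
  have hs := hB.spectral_theorem
  rw [Unitary.conjStarAlgAut_apply] at hs
  set U : Matrix (Fin m) (Fin m) ℝ := (hB.eigenvectorUnitary : Matrix (Fin m) (Fin m) ℝ)
  have h2 : star U * U = 1 := Unitary.star_mul_self_of_mem hB.eigenvectorUnitary.2
  conv_lhs => rw [hs]
  rw [trace_mul_cycle, h2, one_mul, trace_diagonal]
  simp [RCLike.ofReal_real_eq_id]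

lemma my_multiset_eq_of_prod_X_sub_C {f g : Fin m → ℝ}
    (h : ∏ i, (X - C (f i)) = ∏ i, (X - C (g i))) :
    Multiset.map f Finset.univ.val = Multiset.map g Finset.univ.val := by
  have h1 : ∀ (f : Fin m → ℝ), ∏ i, (X - C (f i))
      = ((Finset.univ.val.map f).map fun a => X - C a).prod := by
    intro f; rw [Multiset.map_map]; rfl
  rw [h1 f, h1 g] at h
  have := congrArg Polynomial.roots h
  rwa [roots_multiset_prod_X_sub_C, roots_multiset_prod_X_sub_C] at this

lemma my_sum_comp_eq_of_multiset_eq {f g : Fin m → ℝ}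
    (h : Multiset.map f Finset.univ.val = Multiset.map g Finset.univ.val) (φ : ℝ → ℝ) :
    ∑ i, φ (f i) = ∑ i, φ (g i) := by
  have : ((Finset.univ.val.map f).map φ).sum = ((Finset.univ.val.map g).map φ).sum := by rw [h]
  rw [Multiset.map_map, Multiset.map_map] at this
  exact this

lemma my_nuclearNorm_psd {M : Matrix (Fin m) (Fin m) ℝ} (hM : M.PosSemidef) :
    nuclearNorm M = M.trace := by
  unfold nuclearNorm
  set hH := Matrix.isHermitian_conjTranspose_mul_self M
  have hMM : Mᴴ * M = M * M := by rw [hM.isHermitian]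
  have e1 : ∏ i, (X - C (hH.eigenvalues i))
      = ∏ i, (X - C (hM.isHermitian.eigenvalues i ^ 2)) := by
    rw [← my_charpoly_hermitian hH, ← my_sq_charpoly_hermitian hM.isHermitian, hMM]
  have e2 := my_multiset_eq_of_prod_X_sub_C e1
  rw [my_sum_comp_eq_of_multiset_eq e2 Real.sqrt]
  rw [my_trace_hermitian hM.isHermitian]
  refine Finset.sum_congr rfl fun i _ => ?_
  rw [Real.sqrt_sq_eq_abs, abs_of_nonneg (hM.eigenvalues_nonneg i)]

end NuclearTrace

section Schur

lemma my_proj_trick {p q : Type*} [Fintype p] [Fintype q] [DecidableEq p] [DecidableEq q]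
    (L : Matrix p p ℝ) (L₁ : Matrix p q ℝ) (Ci : Matrix q q ℝ)
    (hCi : Ci * (L₁ᴴ * L₁) = 1) (hCiherm : Ciᴴ = Ci) :
    Lᴴ * L - Lᴴ * L₁ * Ci * (L₁ᴴ * L) =
      (L - L₁ * (Ci * (L₁ᴴ * L)))ᴴ * (L - L₁ * (Ci * (L₁ᴴ * L))) := by
  have hcancel : ∀ (X : Matrix q p ℝ), Ci * (L₁ᴴ * (L₁ * X)) = X := by
    intro X
    rw [← Matrix.mul_assoc L₁ᴴ L₁ X, ← Matrix.mul_assoc Ci (L₁ᴴ * L₁) X, hCi, Matrix.one_mul]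
  have hQL : (L₁ * (Ci * (L₁ᴴ * L)))ᴴ * L = Lᴴ * (L₁ * (Ci * (L₁ᴴ * L))) := by
    simp only [conjTranspose_mul, hCiherm, conjTranspose_conjTranspose, Matrix.mul_assoc]
  have hQQ : (L₁ * (Ci * (L₁ᴴ * L)))ᴴ * (L₁ * (Ci * (L₁ᴴ * L))) =
      Lᴴ * (L₁ * (Ci * (L₁ᴴ * L))) := by
    simp only [conjTranspose_mul, hCiherm, conjTranspose_conjTranspose, Matrix.mul_assoc]
    rw [hcancel (Ci * (L₁ᴴ * L))]
  rw [conjTranspose_sub, sub_mul, mul_sub, mul_sub, hQL, hQQ, sub_self, sub_zero]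
  simp only [Matrix.mul_assoc]

variable {n : ℕ}

lemma my_schur_psd (A : Matrix (Fin n) (Fin n) ℝ) (hA : A.PosSemidef) (J : Finset (Fin n))
    (hJ : (A.submatrix (Subtype.val : J → Fin n) (Subtype.val : J → Fin n)).det ≠ 0) :
    (A - crossApprox A J).PosSemidef := by
  obtain ⟨L, hL⟩ : ∃ L : Matrix (Fin n) (Fin n) ℝ, A = Lᴴ * L := by
    open scoped MatrixOrder in
    refine ⟨CFC.sqrt A, ?_⟩
    open scoped MatrixOrder in
    have h0 : 0 ≤ A := hA.nonneg
    open scoped MatrixOrder in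
    have hs : (CFC.sqrt A)ᴴ = CFC.sqrt A := (CFC.sqrt_nonneg A).posSemidef.isHermitian
    open scoped MatrixOrder in
    rw [hs, CFC.sqrt_mul_sqrt_self A h0]
  have hCu : IsUnit (A.submatrix (Subtype.val : J → Fin n) (Subtype.val : J → Fin n)).det :=
    isUnit_iff_ne_zero.mpr hJ
  have hC : A.submatrix (Subtype.val : J → Fin n) (Subtype.val : J → Fin n)
      = (L.submatrix id (Subtype.val : J → Fin n))ᴴ * L.submatrix id (Subtype.val : J → Fin n) := by
    rw [hL, Matrix.submatrix_mul _ _ Subtype.val id Subtype.val Function.bijective_id,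
      conjTranspose_submatrix]
  have hB : A.submatrix id (Subtype.val : J → Fin n)
      = Lᴴ * L.submatrix id (Subtype.val : J → Fin n) := by
    rw [hL, Matrix.submatrix_mul _ _ id id Subtype.val Function.bijective_id, submatrix_id_id]
  have hBt : A.submatrix (Subtype.val : J → Fin n) id
      = (L.submatrix id (Subtype.val : J → Fin n))ᴴ * L := by
    rw [hL, Matrix.submatrix_mul _ _ Subtype.val id id Function.bijective_id, submatrix_id_id,
      conjTranspose_submatrix]
  have hCherm : (A.submatrix (Subtype.val : J → Fin n) (Subtype.val : J → Fin n))ᴴ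
      = A.submatrix (Subtype.val : J → Fin n) (Subtype.val : J → Fin n) := by
    rw [conjTranspose_submatrix, hA.isHermitian]
  have hCiherm : ((A.submatrix (Subtype.val : J → Fin n) (Subtype.val : J → Fin n))⁻¹)ᴴ
      = (A.submatrix (Subtype.val : J → Fin n) (Subtype.val : J → Fin n))⁻¹ := by
    rw [conjTranspose_nonsing_inv, hCherm]
  have hCi : (A.submatrix (Subtype.val : J → Fin n) (Subtype.val : J → Fin n))⁻¹ *
      ((L.submatrix id (Subtype.val : J → Fin n))ᴴ * L.submatrix id (Subtype.val : J → Fin n))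
      = 1 := by
    rw [← hC, Matrix.nonsing_inv_mul _ hCu]
  have key := my_proj_trick L (L.submatrix id (Subtype.val : J → Fin n))
    ((A.submatrix (Subtype.val : J → Fin n) (Subtype.val : J → Fin n))⁻¹) hCi hCiherm
  have : A - crossApprox A J = Lᴴ * L - Lᴴ * L.submatrix id (Subtype.val : J → Fin n) *
      (A.submatrix (Subtype.val : J → Fin n) (Subtype.val : J → Fin n))⁻¹ *
      ((L.submatrix id (Subtype.val : J → Fin n))ᴴ * L) := by
    rw [crossApprox, hB, hBt, ← hL]
  rw [this, key]
  exact posSemidef_conjTranspose_mul_self _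

lemma my_cross_diag_mem (A : Matrix (Fin n) (Fin n) ℝ) (J : Finset (Fin n))
    (hJ : (A.submatrix (Subtype.val : J → Fin n) (Subtype.val : J → Fin n)).det ≠ 0)
    {i : Fin n} (hi : i ∈ J) (j : Fin n) : crossApprox A J i j = A i j := by
  have hCu : IsUnit (A.submatrix (Subtype.val : J → Fin n) (Subtype.val : J → Fin n)).det :=
    isUnit_iff_ne_zero.mpr hJ
  have h1 : ∀ l, (A.submatrix id (Subtype.val : J → Fin n) *
      (A.submatrix (Subtype.val : J → Fin n) (Subtype.val : J → Fin n))⁻¹) i l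
      = (A.submatrix (Subtype.val : J → Fin n) (Subtype.val : J → Fin n) *
        (A.submatrix (Subtype.val : J → Fin n) (Subtype.val : J → Fin n))⁻¹) ⟨i, hi⟩ l := by
    intro l
    simp [Matrix.mul_apply]
  rw [crossApprox, Matrix.mul_apply]
  calc ∑ l, (A.submatrix id (Subtype.val : J → Fin n) *
        (A.submatrix (Subtype.val : J → Fin n) (Subtype.val : J → Fin n))⁻¹) i l *
        A.submatrix (Subtype.val : J → Fin n) id l j
      = ∑ l, (1 : Matrix J J ℝ) ⟨i, hi⟩ l * A.submatrix (Subtype.val : J → Fin n) id l j := by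
        refine Finset.sum_congr rfl fun l _ => ?_
        rw [h1 l, Matrix.mul_nonsing_inv _ hCu]
    _ = A i j := by
        simp [Matrix.one_apply]

open scoped Classical

noncomputable def insEquiv (J : Finset (Fin n)) (i : Fin n) (hi : i ∉ J) :
    (J ⊕ Unit) ≃ {x // x ∈ insert i J} where
  toFun := fun x => match x with
    | Sum.inl j => ⟨j.1, Finset.mem_insert_of_mem j.2⟩
    | Sum.inr _ => ⟨i, Finset.mem_insert_self i J⟩
  invFun := fun k => if h : k.1 ∈ J then Sum.inl ⟨k.1, h⟩ else Sum.inr ()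
  left_inv := by
    rintro (j | u)
    · simp [j.2]
    · simp [hi]
  right_inv := by
    rintro ⟨k, hk⟩
    rcases Finset.mem_insert.mp hk with h | h
    · subst h; simp [hi]
    · simp [h]

lemma my_submatrix_ins_eq (A : Matrix (Fin n) (Fin n) ℝ) (J : Finset (Fin n)) (i : Fin n)
    (hi : i ∉ J) :
    (A.submatrix (Subtype.val : {x // x ∈ insert i J} → Fin n)
        (Subtype.val : {x // x ∈ insert i J} → Fin n)).submatrix
        (insEquiv J i hi) (insEquiv J i hi)
      = fromBlocks (A.submatrix (Subtype.val : J → Fin n) (Subtype.val : J → Fin n))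
          (Matrix.of fun j _ => A j.1 i) (Matrix.of fun _ j => A i j.1)
            (Matrix.of fun _ _ => A i i) := by
  ext x y
  rcases x with j | u <;> rcases y with k | v <;> rfl

lemma my_pminor_insert (A : Matrix (Fin n) (Fin n) ℝ) (J : Finset (Fin n)) (i : Fin n)
    (hi : i ∉ J)
    (hJ : (A.submatrix (Subtype.val : J → Fin n) (Subtype.val : J → Fin n)).det ≠ 0) :
    (A.submatrix (Subtype.val : {x // x ∈ insert i J} → Fin n)
        (Subtype.val : {x // x ∈ insert i J} → Fin n)).det
      = (A.submatrix (Subtype.val : J → Fin n) (Subtype.val : J → Fin n)).det *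
        ((A - crossApprox A J) i i) := by
  have hCu : IsUnit (A.submatrix (Subtype.val : J → Fin n) (Subtype.val : J → Fin n)).det :=
    isUnit_iff_ne_zero.mpr hJ
  letI := (A.submatrix (Subtype.val : J → Fin n) (Subtype.val : J → Fin n)).invertibleOfIsUnitDet
    hCu
  rw [← Matrix.det_submatrix_equiv_self (insEquiv J i hi), my_submatrix_ins_eq A J i hi,
    Matrix.det_fromBlocks₁₁]
  congr 1
  rw [Matrix.det_unique]
  have hinv : (⅟(A.submatrix (Subtype.val : J → Fin n) (Subtype.val : J → Fin n)) :
      Matrix J J ℝ) = (A.submatrix (Subtype.val : J → Fin n) (Subtype.val : J → Fin n))⁻¹ :=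
    invOf_eq_nonsing_inv _
  rw [hinv]
  show A i i - ((Matrix.of fun (_ : Unit) (j : J) => A i j.1) *
      (A.submatrix (Subtype.val : J → Fin n) (Subtype.val : J → Fin n))⁻¹ *
      (Matrix.of fun (j : J) (_ : Unit) => A j.1 i))
      (default : Unit) (default : Unit) = (A - crossApprox A J) i i
  rw [Matrix.sub_apply]
  congr 1

lemma my_pminor_insert_zero (A : Matrix (Fin n) (Fin n) ℝ) (hA : A.PosSemidef)
    (J : Finset (Fin n)) (i : Fin n) (hi : i ∉ J)
    (h0 : (A.submatrix (Subtype.val : J → Fin n) (Subtype.val : J → Fin n)).det = 0) :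
    (A.submatrix (Subtype.val : {x // x ∈ insert i J} → Fin n)
        (Subtype.val : {x // x ∈ insert i J} → Fin n)).det = 0 := by
  obtain ⟨x, hx0, hx⟩ := Matrix.exists_mulVec_eq_zero_iff.mpr h0
  have hPSD : ((A.submatrix (Subtype.val : {x // x ∈ insert i J} → Fin n)
      (Subtype.val : {x // x ∈ insert i J} → Fin n)).submatrix
      (insEquiv J i hi) (insEquiv J i hi)).PosSemidef :=
    (hA.submatrix _).submatrix _
  set u : (J ⊕ Unit) → ℝ := Sum.elim x 0 with hu
  have hu0 : u ≠ 0 := by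
    intro h
    exact hx0 (funext fun j => congrFun h (Sum.inl j))
  have hMu : star u ⬝ᵥ ((A.submatrix (Subtype.val : {x // x ∈ insert i J} → Fin n)
      (Subtype.val : {x // x ∈ insert i J} → Fin n)).submatrix
      (insEquiv J i hi) (insEquiv J i hi)) *ᵥ u = 0 := by
    rw [my_submatrix_ins_eq A J i hi, hu, star_trivial, fromBlocks_mulVec,
      sumElim_dotProduct_sumElim]
    simp [hx]
  have hker := (hPSD.dotProduct_mulVec_zero_iff u).mp hMu
  have hdet0 : ((A.submatrix (Subtype.val : {x // x ∈ insert i J} → Fin n)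
      (Subtype.val : {x // x ∈ insert i J} → Fin n)).submatrix
      (insEquiv J i hi) (insEquiv J i hi)).det = 0 :=
    Matrix.exists_mulVec_eq_zero_iff.mp ⟨u, hu0, hker⟩
  rwa [Matrix.det_submatrix_equiv_self (insEquiv J i hi)] at hdet0

end Schur

lemma my_comb_sum {n r : ℕ} (f : Finset (Fin n) → ℝ) :
    ∑ J ∈ Finset.powersetCard r (Finset.univ : Finset (Fin n)), ∑ i ∈ Jᶜ, f (insert i J)
      = ∑ K ∈ Finset.powersetCard (r + 1) (Finset.univ : Finset (Fin n)), ∑ _i ∈ K, f K := by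
  classical
  rw [Finset.sum_sigma', Finset.sum_sigma']
  refine Finset.sum_nbij' (fun p => ⟨insert p.2 p.1, p.2⟩) (fun q => ⟨q.1.erase q.2, q.2⟩)
    ?_ ?_ ?_ ?_ ?_
  · rintro ⟨J, i⟩ hp
    rw [Finset.mem_sigma] at hp
    obtain ⟨hJ, hi⟩ := hp
    rw [Finset.mem_compl] at hi
    rw [Finset.mem_sigma]
    constructor
    · rw [Finset.mem_powersetCard_univ] at hJ ⊢
      rw [Finset.card_insert_of_notMem hi, hJ]
    · exact Finset.mem_insert_self _ _
  · rintro ⟨K, i⟩ hq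
    rw [Finset.mem_sigma] at hq
    obtain ⟨hK, hi⟩ := hq
    rw [Finset.mem_sigma]
    constructor
    · rw [Finset.mem_powersetCard_univ] at hK ⊢
      rw [Finset.card_erase_of_mem hi, hK]
      simp
    · simp
  · rintro ⟨J, i⟩ hp
    rw [Finset.mem_sigma] at hp
    obtain ⟨hJ, hi⟩ := hp
    rw [Finset.mem_compl] at hi
    simp [Finset.erase_insert hi]
  · rintro ⟨K, i⟩ hq
    rw [Finset.mem_sigma] at hq
    obtain ⟨hK, hi⟩ := hq
    simp [Finset.insert_erase hi]
  · rintro ⟨J, i⟩ hp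
    rfl

open scoped Classical in
/-- For `A` SPSD and `1 ≤ r < n`,
`∑_{|J| = r, A(J,J) invertible} det A(J,J) ‖A - A_J‖_* = (r+1) ∑_{|Ĵ| = r+1} det A(Ĵ,Ĵ)`. -/
theorem sum_det_mul_nuclear_eq {n r : ℕ}
    (A : Matrix (Fin n) (Fin n) ℝ) (hA : A.PosSemidef) (hr : 1 ≤ r) (hrn : r < n) :
    ∑ J ∈ Finset.univ.filter (fun J : Finset (Fin n) => J.card = r ∧ pminor A J ≠ 0),
        pminor A J * nuclearNorm (A - crossApprox A J) =
      (r + 1 : ℝ) *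
        ∑ K ∈ Finset.powersetCard (r + 1) (Finset.univ : Finset (Fin n)), pminor A K := by
  classical
  have main : ∀ J : Finset (Fin n), pminor A J ≠ 0 →
      pminor A J * nuclearNorm (A - crossApprox A J) = ∑ i ∈ Jᶜ, pminor A (insert i J) := by
    intro J hJ0
    have hdet : (A.submatrix (Subtype.val : J → Fin n) (Subtype.val : J → Fin n)).det ≠ 0 := hJ0
    have hS := my_schur_psd A hA J hdet
    have h1 : nuclearNorm (A - crossApprox A J) = (A - crossApprox A J).trace :=
      my_nuclearNorm_psd hS
    have htr : (A - crossApprox A J).trace = ∑ i, (A - crossApprox A J) i i := rfl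
    have hzero : ∀ i ∈ J, (A - crossApprox A J) i i = 0 := by
      intro i hi
      rw [Matrix.sub_apply, my_cross_diag_mem A J hdet hi, sub_self]
    rw [h1, htr, ← Finset.sum_add_sum_compl J, Finset.sum_eq_zero hzero, zero_add,
      Finset.mul_sum]
    refine Finset.sum_congr rfl fun i hi => ?_
    have hiJ : i ∉ J := Finset.mem_compl.mp hi
    exact (my_pminor_insert A J i hiJ hdet).symm
  have vanish : ∀ J : Finset (Fin n), pminor A J = 0 →
      ∑ i ∈ Jᶜ, pminor A (insert i J) = 0 := by
    intro J hJ0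
    refine Finset.sum_eq_zero fun i hi => ?_
    exact my_pminor_insert_zero A hA J i (Finset.mem_compl.mp hi) hJ0
  calc ∑ J ∈ Finset.univ.filter (fun J : Finset (Fin n) => J.card = r ∧ pminor A J ≠ 0),
        pminor A J * nuclearNorm (A - crossApprox A J)
      = ∑ J ∈ Finset.univ.filter (fun J : Finset (Fin n) => J.card = r ∧ pminor A J ≠ 0),
          ∑ i ∈ Jᶜ, pminor A (insert i J) :=
        Finset.sum_congr rfl fun J hJ => main J (Finset.mem_filter.mp hJ).2.2
    _ = ∑ J ∈ Finset.powersetCard r (Finset.univ : Finset (Fin n)),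
          ∑ i ∈ Jᶜ, pminor A (insert i J) := by
        refine Finset.sum_subset ?_ ?_
        · intro J hJ
          rw [Finset.mem_powersetCard_univ]
          exact (Finset.mem_filter.mp hJ).2.1
        · intro J hJ hJn
          refine vanish J ?_
          by_contra hne
          exact hJn (Finset.mem_filter.mpr ⟨Finset.mem_univ _,
            Finset.mem_powersetCard_univ.mp hJ, hne⟩)
    _ = ∑ K ∈ Finset.powersetCard (r + 1) (Finset.univ : Finset (Fin n)),
          ∑ _i ∈ K, pminor A K := my_comb_sum _
    _ = (r + 1 : ℝ) *
          ∑ K ∈ Finset.powersetCard (r + 1) (Finset.univ : Finset (Fin n)), pminor A K := by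
        rw [Finset.mul_sum]
        refine Finset.sum_congr rfl fun K hK => ?_
        rw [Finset.sum_const, Finset.mem_powersetCard_univ.mp hK, nsmul_eq_mul]
        push_cast
        ring
end
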